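/- arXiv:0707.1430 — 11 statements merged into one kernel-verified Lean document; each statement's English description precedes it below -/
import Mathlib

section
/- A commutative loop is a C-loop if and only if it is an RC-loop; likewise, a commutative loop is a C-loop if and only if it is an LC-loop. -/
/-- A loop operation on `L` with two-sided identity `e` and bijective translations. -/
def IsLoopOp {L : Type*} (mul : L → L → L) (e : L) : Prop :=
  (∀ x, mul e x = x) ∧ (∀ x, mul x e = x) ∧
  (∀ a, Function.Bijective (fun x => mul a x)) ∧
  (∀ a, Function.Bijective (fun x => mul x a))

/-- A quasigroup operation: all translations are bijective. -/
def IsQuasigroupOp {L : Type*} (mul : L → L → L) : Prop :=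
  (∀ a, Function.Bijective (fun x => mul a x)) ∧
  (∀ a, Function.Bijective (fun x => mul x a))

/-- LC identity: (x·(x·y))·z = x·(x·(y·z)). -/
def LCIdent {L : Type*} (mul : L → L → L) : Prop :=
  ∀ x y z, mul (mul x (mul x y)) z = mul x (mul x (mul y z))

/-- RC identity: ((y·z)·x)·x = y·((z·x)·x). -/
def RCIdent {L : Type*} (mul : L → L → L) : Prop :=
  ∀ x y z, mul (mul (mul y z) x) x = mul y (mul (mul z x) x)

/-- C identity: ((y·x)·x)·z = y·(x·(x·z)). -/
def CIdent {L : Type*} (mul : L → L → L) : Prop :=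
  ∀ x y z, mul (mul (mul y x) x) z = mul y (mul x (mul x z))

/-- Commutativity of a binary operation. -/
def CommOp {L : Type*} (mul : L → L → L) : Prop := ∀ x y, mul x y = mul y x

/-- `a` lies in the center of `(L, mul)`. -/
def InCenterOp {L : Type*} (mul : L → L → L) (a : L) : Prop :=
  (∀ x, mul a x = mul x a) ∧
  (∀ x y, mul (mul a x) y = mul a (mul x y)) ∧
  (∀ x y, mul (mul x a) y = mul x (mul a y)) ∧
  (∀ x y, mul (mul x y) a = mul x (mul y a))

/-- Central square: every square lies in the center. -/
def CentralSquareOp {L : Type*} (mul : L → L → L) : Prop :=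
  ∀ x, InCenterOp mul (mul x x)

/-- Alternative: x·(x·y) = (x·x)·y and (y·x)·x = y·(x·x). -/
def AlternativeOp {L : Type*} (mul : L → L → L) : Prop :=
  (∀ x y, mul x (mul x y) = mul (mul x x) y) ∧
  (∀ x y, mul (mul y x) x = mul y (mul x x))

/-- Two binary systems on `L` are isotopic. -/
def Isotopic {L : Type*} (m₁ m₂ : L → L → L) : Prop :=
  ∃ A B C : L → L, Function.Bijective A ∧ Function.Bijective B ∧ Function.Bijective C ∧
    ∀ x y, m₂ (A x) (B y) = C (m₁ x y)

/-- A commutative loop is a C-loop iff it is an RC-loop;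
likewise it is a C-loop iff it is an LC-loop. -/
theorem stmt1 {L : Type*} (mul : L → L → L) (e : L)
    (hloop : IsLoopOp mul e) (hcomm : CommOp mul) :
    (CIdent mul ↔ RCIdent mul) ∧ (CIdent mul ↔ LCIdent mul) := by
  obtain ⟨he1, he2, hL, _hR⟩ := hloop
  have lcan : ∀ (a : L) {u v : L}, mul a u = mul a v → u = v :=
    fun a _ _ h => (hL a).1 h
  have lsurj : ∀ (a v : L), ∃ w, mul a w = v := fun a v => (hL a).2 v
  -- All the consequences of the C identity we need.
  have csuite : CIdent mul →
      (∀ x y, mul (mul y x) x = mul y (mul x x)) ∧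
      (∀ x z, mul x (mul x z) = mul (mul x x) z) ∧
      (∀ x y z, mul (mul y (mul x x)) z = mul y (mul (mul x x) z)) ∧
      (∀ x y z, mul (mul x x) (mul y z) = mul (mul (mul x x) y) z) := by
    intro hC
    have ralt : ∀ x y, mul (mul y x) x = mul y (mul x x) := by
      intro x y
      have h := hC x y e
      simpa only [he2] using h
    have lalt : ∀ x z, mul x (mul x z) = mul (mul x x) z := by
      intro x z
      have h := hC x e z
      simp only [he1] at h
      exact h.symm
    have mid : ∀ x y z, mul (mul y (mul x x)) z = mul y (mul (mul x x) z) := by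
      intro x y z
      have h := hC x y z
      rwa [ralt x y, lalt x z] at h
    -- left inverse property: if a·b = e then b·(a·v) = v
    have lip : ∀ a b : L, mul a b = e → ∀ v, mul b (mul a v) = v := by
      intro a b hab v
      have hba : mul b a = e := by rw [hcomm]; exact hab
      obtain ⟨w, hw⟩ := lsurj a v
      have hbaa : mul b (mul a a) = a := by
        rw [← ralt a b, hba, he1]
      rw [← hw, lalt a w, ← mid a b w, hbaa]
    -- squares lie in the left nucleus
    have lam : ∀ x y z, mul (mul x x) (mul y z) = mul (mul (mul x x) y) z := by
      intro x y z
      obtain ⟨x', hx'⟩ := lsurj x e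
      have hx'x : mul x' x = e := by rw [hcomm]; exact hx'
      -- (x'·x')·(x·x) = e
      have hs's : mul (mul x' x') (mul x x) = e := by
        have h1 : mul (mul x' x') x = x' := by
          rw [← lalt x' x, hx'x, he2]
        rw [← ralt x (mul x' x'), h1, hx'x]
      have hss' : mul (mul x x) (mul x' x') = e := by rw [hcomm]; exact hs's
      obtain ⟨y', hy'⟩ := lsurj y e
      obtain ⟨d'', hd''⟩ := lsurj (mul y' (mul x' x')) e
      have hd''c : mul d'' (mul y' (mul x' x')) = e := by rw [hcomm]; exact hd''
      have h1 : ∀ w, mul (mul y' (mul x' x'))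
          (mul (mul x x) (mul y w)) = w := by
        intro w
        rw [mid x' y', lip (mul x x) (mul x' x') hss', lip y y' hy']
      have h2 : ∀ w, mul (mul y' (mul x' x')) (mul d'' w) = w :=
        fun w => lip d'' (mul y' (mul x' x')) hd''c w
      have hkey : ∀ w, mul (mul x x) (mul y w) = mul d'' w :=
        fun w => lcan _ ((h1 w).trans (h2 w).symm)
      have hd''val : d'' = mul (mul x x) y := by
        have h3 := hkey e
        simp only [he2] at h3
        exact h3.symm
      have h4 := hkey z
      rwa [hd''val] at h4
    exact ⟨ralt, lalt, mid, lam⟩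
  refine ⟨⟨fun hC => ?_, fun hRC => ?_⟩, ⟨fun hC => ?_, fun hLC => ?_⟩⟩
  · -- C → RC
    obtain ⟨ralt, lalt, mid, lam⟩ := csuite hC
    intro x y z
    calc mul (mul (mul y z) x) x = mul (mul y z) (mul x x) := ralt x (mul y z)
      _ = mul (mul x x) (mul y z) := hcomm _ _
      _ = mul (mul (mul x x) y) z := lam x y z
      _ = mul (mul y (mul x x)) z := by rw [hcomm (mul x x) y]
      _ = mul y (mul (mul x x) z) := mid x y z
      _ = mul y (mul z (mul x x)) := by rw [hcomm (mul x x) z]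
      _ = mul y (mul (mul z x) x) := by rw [ralt x z]
  · -- RC → C
    have ralt : ∀ x y, mul (mul y x) x = mul y (mul x x) := by
      intro x y
      have h := hRC x y e
      simpa only [he1, he2] using h
    have rho : ∀ x y z, mul (mul y z) (mul x x) = mul y (mul z (mul x x)) := by
      intro x y z
      have h := hRC x y z
      rwa [ralt x (mul y z), ralt x z] at h
    have P : ∀ x y z, mul (mul x x) (mul y z) = mul y (mul (mul x x) z) := by
      intro x y z
      calc mul (mul x x) (mul y z) = mul (mul y z) (mul x x) := hcomm _ _
        _ = mul y (mul z (mul x x)) := rho x y z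
        _ = mul y (mul (mul x x) z) := by rw [hcomm z (mul x x)]
    have mid : ∀ x y z, mul (mul y (mul x x)) z = mul y (mul (mul x x) z) := by
      intro x y z
      calc mul (mul y (mul x x)) z = mul z (mul y (mul x x)) := hcomm _ _
        _ = mul z (mul (mul x x) y) := by rw [hcomm y (mul x x)]
        _ = mul (mul x x) (mul z y) := (P x z y).symm
        _ = mul (mul x x) (mul y z) := by rw [hcomm z y]
        _ = mul y (mul (mul x x) z) := P x y z
    have lalt : ∀ x z, mul x (mul x z) = mul (mul x x) z := by
      intro x z
      calc mul x (mul x z) = mul (mul x z) x := hcomm _ _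
        _ = mul (mul z x) x := by rw [hcomm x z]
        _ = mul z (mul x x) := ralt x z
        _ = mul (mul x x) z := hcomm _ _
    intro x y z
    rw [ralt x y, lalt x z]
    exact mid x y z
  · -- C → LC
    obtain ⟨_ralt, lalt, _mid, lam⟩ := csuite hC
    intro x y z
    rw [lalt x y, lalt x (mul y z), ← lam x y z]
  · -- LC → C
    have lalt : ∀ x z, mul x (mul x z) = mul (mul x x) z := by
      intro x z
      have h := hLC x e z
      simp only [he1, he2] at h
      exact h.symm
    have ralt : ∀ x y, mul (mul y x) x = mul y (mul x x) := by
      intro x y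
      calc mul (mul y x) x = mul x (mul y x) := hcomm _ _
        _ = mul x (mul x y) := by rw [hcomm y x]
        _ = mul (mul x x) y := lalt x y
        _ = mul y (mul x x) := hcomm _ _
    have lam : ∀ x y z, mul (mul (mul x x) y) z = mul (mul x x) (mul y z) := by
      intro x y z
      have h := hLC x y z
      rwa [lalt x y, lalt x (mul y z)] at h
    have mid : ∀ x y z, mul (mul y (mul x x)) z = mul y (mul (mul x x) z) := by
      intro x y z
      calc mul (mul y (mul x x)) z = mul (mul (mul x x) y) z := by
            rw [hcomm y (mul x x)]
        _ = mul (mul x x) (mul y z) := lam x y z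
        _ = mul (mul x x) (mul z y) := by rw [hcomm y z]
        _ = mul (mul (mul x x) z) y := (lam x z y).symm
        _ = mul y (mul (mul x x) z) := hcomm _ _
    intro x y z
    rw [ralt x y, lalt x z]
    exact mid x y z
end

section
/- Let (L,·) be a commutative LC-loop with identity e, let a ∈ L and set B = L_a (note L_a = R_a by commutativity), and let (L,∘) be a commutative loop such that (I,B,B) is an isotopism from (L,·) to (L,∘), i.e. x ∘ (a·y) = (x·y)·a for all x,y. Then: (1) (L,·) is a commutative C-loop; (2) the operation ∘ coincides with the right derivative F_{a⁻¹} of (L,·) with respect to a⁻¹ and also with the left derivative F^{a⁻¹} of (L,·) with respect to a⁻¹; and (3) (L,∘) is a commutative C-loop. -/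
/-- For a commutative LC-loop `(L,·)` with identity `e`, `a ∈ L`,
and a commutative loop `(L,∘)` with `(I, L_a, L_a)` an isotopism from `(L,·)` to `(L,∘)`
(i.e. x ∘ (a·y) = (x·y)·a): (1) `(L,·)` is a commutative C-loop;
(2) `∘` coincides with the right derivative `F_{a⁻¹}` (i.e. (x∘y)·a⁻¹ = x·(y·a⁻¹))
and with the left derivative `F^{a⁻¹}` (i.e. a⁻¹·(x∘y) = (a⁻¹·x)·y);
(3) `(L,∘)` is a commutative C-loop. -/
theorem stmt2 {L : Type*} (mul circ : L → L → L) (e e₂ a a' : L)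
    (hloop : IsLoopOp mul e) (hcomm : CommOp mul) (hLC : LCIdent mul)
    (hinv : mul a a' = e ∧ mul a' a = e)
    (hloop₂ : IsLoopOp circ e₂) (hcomm₂ : CommOp circ)
    (hiso : ∀ x y, circ x (mul a y) = mul (mul x y) a) :
    (CIdent mul ∧ CommOp mul) ∧
    ((∀ x y, mul (circ x y) a' = mul x (mul y a')) ∧
     (∀ x y, mul a' (circ x y) = mul (mul a' x) y)) ∧
    (CIdent circ ∧ CommOp circ) := by
  obtain ⟨he1, he2, hbl, hbr⟩ := hloop
  have laInj : ∀ c : L, Function.Injective (fun x => mul c x) := fun c => (hbl c).injective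
  have raInj : ∀ c : L, Function.Injective (fun x => mul x c) := fun c => (hbr c).injective
  -- left alternative law
  have la : ∀ x z, mul (mul x x) z = mul x (mul x z) := by
    intro x z
    have h := hLC x e z
    rw [he2, he1] at h
    exact h
  -- squares associate
  have sqassoc : ∀ x u v, mul (mul (mul x x) u) v = mul (mul x x) (mul u v) := by
    intro x u v
    have h := hLC x u v
    rw [← la x u, ← la x (mul u v)] at h
    exact h
  -- the star identity from commutativity of circ
  have star : ∀ u v, mul (mul a u) v = mul (mul a v) u := by
    intro u v
    have h3 := hcomm₂ (mul a u) (mul a v)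
    rw [hiso (mul a u) v, hiso (mul a v) u] at h3
    exact raInj a h3
  have h_ava' : ∀ v, mul (mul a v) a' = v := by
    intro v
    have h := star a' v
    rw [hinv.1, he1] at h
    exact h.symm
  have h_vaa' : ∀ v, mul (mul v a) a' = v := by
    intro v; rw [hcomm v a]; exact h_ava' v
  have h_a'av : ∀ v, mul a' (mul a v) = v := by
    intro v; rw [hcomm a' (mul a v)]; exact h_ava' v
  have h_va'a : ∀ v, mul (mul v a') a = v := by
    intro v
    apply raInj a'
    show mul (mul (mul v a') a) a' = mul v a'
    exact h_vaa' (mul v a')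
  have h_aa'v : ∀ v, mul a (mul a' v) = v := by
    intro v
    rw [hcomm a (mul a' v), hcomm a' v]
    exact h_va'a v
  -- (a·x)·s = x·(a·s)
  have E3 : ∀ x s, mul (mul a x) s = mul x (mul a s) := by
    intro x s
    rw [star x s]
    exact hcomm (mul a s) x
  have sq_ax : ∀ x, mul (mul a x) (mul a x) = mul (mul a a) (mul x x) := by
    intro x
    rw [star x (mul a x), ← la a x, sqassoc a x x]
  -- commuting of left translations by a
  have M : ∀ x t, mul x (mul a t) = mul a (mul x t) := by
    intro x t
    have F : mul x (mul a (mul x (mul a t))) = mul (mul a a) (mul x (mul x t)) := by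
      calc mul x (mul a (mul x (mul a t)))
          = mul x (mul a (mul (mul a x) t)) := by rw [E3 x t]
        _ = mul (mul a x) (mul (mul a x) t) := by rw [E3 x (mul (mul a x) t)]
        _ = mul (mul (mul a x) (mul a x)) t := (la (mul a x) t).symm
        _ = mul (mul (mul a a) (mul x x)) t := by rw [sq_ax x]
        _ = mul (mul a a) (mul (mul x x) t) := sqassoc a (mul x x) t
        _ = mul (mul a a) (mul x (mul x t)) := by rw [la x t]
    have F2 : mul x (mul a (mul a (mul x t))) = mul (mul a a) (mul x (mul x t)) := by
      calc mul x (mul a (mul a (mul x t)))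
          = mul x (mul (mul a a) (mul x t)) := by rw [la a (mul x t)]
        _ = mul (mul (mul a a) (mul x t)) x := hcomm _ _
        _ = mul (mul a a) (mul (mul x t) x) := sqassoc a (mul x t) x
        _ = mul (mul a a) (mul x (mul x t)) := by rw [hcomm (mul x t) x]
    have h := F.trans F2.symm
    have h2 : mul a (mul x (mul a t)) = mul a (mul a (mul x t)) := laInj x h
    exact laInj a h2
  -- circ coincides with mul
  have hcirc : ∀ x y, circ x y = mul x y := by
    intro x y
    have h := hiso x (mul a' y)
    rw [h_aa'v y] at h
    rw [h, hcomm (mul x (mul a' y)) a, ← M x (mul a' y), h_aa'v y]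
  -- right alternative
  have ra : ∀ y x, mul (mul y x) x = mul (mul x x) y := by
    intro y x
    rw [hcomm y x, hcomm (mul x y) x]
    exact (la x y).symm
  have Cmul : CIdent mul := by
    intro x y z
    rw [ra y x, sqassoc x y z, ← la x z, hcomm y (mul (mul x x) z), sqassoc x z y,
      hcomm z y]
  refine ⟨⟨Cmul, hcomm⟩, ⟨?_, ?_⟩, ?_, hcomm₂⟩
  · intro x y
    rw [hcirc x y]
    apply laInj a
    show mul a (mul (mul x y) a') = mul a (mul x (mul y a'))
    calc mul a (mul (mul x y) a')
        = mul a (mul a' (mul x y)) := by rw [hcomm (mul x y) a']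
      _ = mul x y := h_aa'v _
      _ = mul x (mul a (mul a' y)) := by rw [h_aa'v y]
      _ = mul x (mul a (mul y a')) := by rw [hcomm a' y]
      _ = mul a (mul x (mul y a')) := M x (mul y a')
  · intro x y
    rw [hcirc x y]
    apply laInj a
    show mul a (mul a' (mul x y)) = mul a (mul (mul a' x) y)
    calc mul a (mul a' (mul x y)) = mul x y := h_aa'v _
      _ = mul (mul a (mul a' x)) y := by rw [h_aa'v x]
      _ = mul a (mul (mul a' x) y) := (E3 (mul a' x) y).trans (M (mul a' x) y)
  · intro x y z
    simp only [hcirc]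
    exact Cmul x y z
end

section
/- Let (L,·) be a commutative LC-loop with identity e, let a ∈ L and set B = L_a (= R_a by commutativity), and let (L,∘) be a commutative loop such that (I,B,B) is an isotopism from (L,·) to (L,∘). Then L_a is an isomorphism of (L, F_{a⁻¹,e}) onto (L,∘), R_a is an isomorphism of (L, F_{e,a⁻¹}) onto (L,∘), and both f,g-isotopes F_{a⁻¹,e} and F_{e,a⁻¹} are commutative C-loops. -/
/-- In the setting of a commutative LC-loop `(L,·)` with identity `e`,
`a ∈ L`, and a commutative loop `(L,∘)` with `(I, L_a, L_a)` an isotopism from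
`(L,·)` to `(L,∘)`, with `∗ = F_{a⁻¹,e}` and `⋆ = F_{e,a⁻¹}` (the f,g-isotopes),
`L_a` is an isomorphism of `(L,∗)` onto `(L,∘)`, `R_a` is an isomorphism of
`(L,⋆)` onto `(L,∘)`, and both `(L,∗)` and `(L,⋆)` are commutative C-loops. -/
theorem stmt3 {L : Type*} (mul circ star star2 : L → L → L) (e e₂ a a' : L)
    (hloop : IsLoopOp mul e) (hcomm : CommOp mul) (hLC : LCIdent mul)
    (hinv : mul a a' = e ∧ mul a' a = e)
    (hloop₂ : IsLoopOp circ e₂) (hcomm₂ : CommOp circ)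
    (hiso : ∀ x y, circ x (mul a y) = mul (mul x y) a)
    (hstar : ∀ x y, star (mul x e) (mul a' y) = mul x y)
    (hstar2 : ∀ x y, star2 (mul x a') (mul e y) = mul x y) :
    (Function.Bijective (fun x => mul a x) ∧
      ∀ x y, mul a (star x y) = circ (mul a x) (mul a y)) ∧
    (Function.Bijective (fun x => mul x a) ∧
      ∀ x y, mul (star2 x y) a = circ (mul x a) (mul y a)) ∧
    ((∃ e₃, IsLoopOp star e₃) ∧ CIdent star ∧ CommOp star) ∧
    ((∃ e₄, IsLoopOp star2 e₄) ∧ CIdent star2 ∧ CommOp star2) := by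
  obtain ⟨he1, he2, hlb, hrb⟩ := hloop
  -- left alternative law
  have leftalt : ∀ x y, mul (mul x x) y = mul x (mul x y) := by
    intro x y
    have h := hLC x e y
    rwa [he2, he1] at h
  -- C identity for mul
  have hC : ∀ x y z, mul (mul (mul y x) x) z = mul y (mul x (mul x z)) := by
    intro x y z
    rw [hcomm y x, hcomm (mul x y) x, hLC, hcomm y z, ← hLC, hcomm]
  -- left inverse properties
  have LIPa : ∀ w, mul a' (mul a w) = w := by
    intro w
    obtain ⟨z, hz⟩ := (hlb a).2 w
    simp only at hz
    have h := hC a a' z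
    rw [hinv.2, he1, hz] at h
    exact h.symm
  have LIPa' : ∀ w, mul a (mul a' w) = w := by
    intro w
    obtain ⟨z, hz⟩ := (hlb a').2 w
    simp only at hz
    have h := hC a' a z
    rw [hinv.1, he1, hz] at h
    exact h.symm
  -- squares are central (as left/middle associators)
  have cent : ∀ x p q, mul (mul x x) (mul p q) = mul (mul (mul x x) p) q := by
    intro x p q
    rw [leftalt, ← hLC, ← leftalt]
  -- the key identity from commutativity of circ
  have H : ∀ x y, mul x y = mul (mul a y) (mul a' x) := by
    intro x y
    have h1 := hiso x y
    have h2 := hiso (mul a y) (mul a' x)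
    rw [LIPa' x] at h2
    have h3 : circ x (mul a y) = circ (mul a y) x := hcomm₂ x (mul a y)
    rw [h1, h2] at h3
    exact (hrb a).1 h3
  have H2 : ∀ x y, mul x y = mul (mul a x) (mul a' y) := fun x y =>
    (hcomm x y).trans (H y x)
  -- explicit forms of star and star2
  have sdef : ∀ x y, star x y = mul x (mul a y) := by
    intro x y
    have h := hstar x (mul a y)
    rw [he2, LIPa] at h
    exact h
  have s2def : ∀ x y, star2 x y = mul (mul a x) y := by
    intro x y
    have h := hstar2 (mul a x) y
    have hx : mul (mul a x) a' = x := by rw [hcomm, LIPa]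
    rw [he1, hx] at h
    exact h
  -- commutativity-type identity for star
  have K : ∀ x y, mul y (mul a' x) = mul x (mul a' y) := by
    intro x y
    rw [H y (mul a' x), LIPa']
  have scomm : ∀ x y, mul x (mul a y) = mul y (mul a x) := by
    intro x y
    have c1 : ∀ u v : L, mul u (mul a v) = mul (mul a a) (mul u (mul a' v)) := by
      intro u v
      rw [H u (mul a v), ← leftalt, ← cent, K v u]
    rw [c1 x y, c1 y x, K y x]
  -- key identity P
  have P : ∀ x w, mul a (mul x (mul a (mul x w))) =
      mul (mul (mul a x) (mul a x)) w := by
    intro x w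
    have step1 : mul x (mul a (mul x w)) =
        mul (mul (mul a x) (mul a x)) (mul a' w) := by
      rw [H2 x (mul a (mul x w)), LIPa, H2 x w, ← leftalt]
    rw [step1]
    have step2 : mul a (mul (mul (mul a x) (mul a x)) (mul a' w)) =
        mul (mul (mul a x) (mul a x)) (mul a (mul a' w)) := by
      rw [hcomm a, ← cent, hcomm (mul a' w) a]
    rw [step2, LIPa']
  -- C identity for star
  have starC : CIdent star := by
    intro x y z
    simp only [sdef]
    rw [P x (mul a z)]
    have l1 : mul (mul (mul y (mul a x)) (mul a x)) (mul a z)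
        = mul (mul (mul a x) (mul a x)) (mul y (mul a z)) := by
      rw [hcomm y (mul a x), hcomm (mul (mul a x) y) (mul a x),
        ← leftalt, ← cent (mul a x) y (mul a z)]
    have r1 : mul y (mul (mul (mul a x) (mul a x)) (mul a z))
        = mul (mul (mul a x) (mul a x)) (mul y (mul a z)) := by
      rw [hcomm y (mul (mul (mul a x) (mul a x)) (mul a z)),
        ← cent (mul a x) (mul a z) y, hcomm (mul a z) y]
    rw [l1, r1]
  -- commutativity of star
  have starComm : CommOp star := by
    intro x y
    rw [sdef, sdef, scomm]
  -- star2 equals star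
  have s2eq : star2 = star := by
    funext x y
    rw [s2def, sdef, hcomm (mul a x) y, scomm y x]
  -- loop structure of star
  have starLoop : IsLoopOp star a' := by
    refine ⟨?_, ?_, ?_, ?_⟩
    · intro x; rw [sdef, LIPa]
    · intro x; rw [sdef, hinv.1, he2]
    · intro b
      have : (fun x => star b x) = (fun x => mul b x) ∘ (fun x => mul a x) := by
        funext x; simp [sdef]
      rw [this]
      exact (hlb b).comp (hlb a)
    · intro b
      have : (fun x => star x b) = (fun x => mul x (mul a b)) := by
        funext x; simp [sdef]
      rw [this]
      exact hrb (mul a b)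
  -- isomorphism statement for L_a
  have isom1 : ∀ x y, mul a (star x y) = circ (mul a x) (mul a y) := by
    intro x y
    rw [hcomm₂, hiso (mul a y) x, sdef, hcomm a (mul x (mul a y)),
      hcomm x (mul a y)]
  refine ⟨⟨hlb a, isom1⟩, ⟨hrb a, ?_⟩, ⟨⟨a', starLoop⟩, starC, starComm⟩,
    ⟨⟨a', s2eq ▸ starLoop⟩, s2eq ▸ starC, s2eq ▸ starComm⟩⟩
  intro x y
  rw [s2eq, hcomm (star x y) a, isom1, hcomm x a, hcomm y a]
end

section
/- Let (L,·) be a commutative C-loop with identity e, let a ∈ L and set B = L_a (= R_a by commutativity), and let (L,∘) be a commutative loop such that (B,I,B) is an isotopism from (L,·) to (L,∘), i.e. (a·x) ∘ y = (x·y)·a for all x,y. Then: (1) the operation ∘ coincides with the left derivative F^{a⁻¹} and with the right derivative F_{a⁻¹} of (L,·) with respect to a⁻¹, and (L,∘) is a commutative C-loop; (2) (L,∘) is isomorphic to the f,g-isotopes F_{a⁻¹,e} and F_{e,a⁻¹}, and hence F_{a⁻¹,e} and F_{e,a⁻¹} are commutative C-loops. -/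
/-- For a commutative C-loop `(L,·)` with identity `e`, `a ∈ L`,
and a commutative loop `(L,∘)` with `(L_a, I, L_a)` an isotopism from `(L,·)` to `(L,∘)`
(i.e. (a·x) ∘ y = (x·y)·a): (1) `∘` coincides with the left derivative `F^{a⁻¹}`
and with the right derivative `F_{a⁻¹}`, and `(L,∘)` is a commutative C-loop;
(2) `(L,∘)` is isomorphic to the f,g-isotopes `F_{a⁻¹,e}` and `F_{e,a⁻¹}`,
and both of those are commutative C-loops. -/
theorem stmt4 {L : Type*} (mul circ star star2 : L → L → L) (e e₂ a a' : L)
    (hloop : IsLoopOp mul e) (hcomm : CommOp mul) (hC : CIdent mul)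
    (hinv : mul a a' = e ∧ mul a' a = e)
    (hloop₂ : IsLoopOp circ e₂) (hcomm₂ : CommOp circ)
    (hiso : ∀ x y, circ (mul a x) y = mul (mul x y) a)
    (hstar : ∀ x y, star (mul x e) (mul a' y) = mul x y)
    (hstar2 : ∀ x y, star2 (mul x a') (mul e y) = mul x y) :
    ((∀ x y, mul a' (circ x y) = mul (mul a' x) y) ∧
     (∀ x y, mul (circ x y) a' = mul x (mul y a')) ∧
     CIdent circ ∧ CommOp circ) ∧
    ((∃ α : L → L, Function.Bijective α ∧ ∀ x y, α (star x y) = circ (α x) (α y)) ∧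
     (∃ β : L → L, Function.Bijective β ∧ ∀ x y, β (star2 x y) = circ (β x) (β y)) ∧
     ((∃ e₃, IsLoopOp star e₃) ∧ CIdent star ∧ CommOp star) ∧
     ((∃ e₄, IsLoopOp star2 e₄) ∧ CIdent star2 ∧ CommOp star2)) := by
  
  obtain ⟨hle, hre, hlb, hrb⟩ := hloop
  -- general inverse property of C-loops: if g·g' = e then g'·(g·w) = w
  have ipgen : ∀ g g' : L, mul g g' = e → ∀ w, mul g' (mul g w) = w := by
    intro g g' h w
    obtain ⟨z, hz0⟩ := (hlb g).2 w
    have hz : mul g z = w := hz0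
    have h' : mul g' g = e := (hcomm g' g).trans h
    have hc := hC g g' z
    rw [h', hle] at hc
    rw [← hz]
    exact hc.symm
  have ip_ba : ∀ w, mul a' (mul a w) = w := ipgen a a' hinv.1
  have ip_ab : ∀ w, mul a (mul a' w) = w := ipgen a' a hinv.2
  have rcancel : ∀ x y : L, mul x a = mul y a → x = y := fun x y h => (hrb a).1 h
  have circ_eqn : ∀ u v, circ u v = mul a (mul (mul a' u) v) := by
    intro u v
    have h1 : circ (mul a (mul a' u)) v = mul (mul (mul a' u) v) a := hiso (mul a' u) v
    rw [ip_ab] at h1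
    rw [h1, hcomm]
  have E2 : ∀ x m : L, mul x (mul a m) = mul m (mul a x) := by
    intro x m
    have h1 := hiso x (mul a m)
    have h2 := hiso m (mul a x)
    have h3 := hcomm₂ (mul a x) (mul a m)
    rw [h1, h2] at h3
    exact rcancel _ _ h3
  have amid : ∀ u w, mul (mul u a) w = mul u (mul a w) := by
    intro u w
    rw [E2 u w, hcomm (mul u a) w, hcomm u a]
  have b_left : ∀ q z, mul a' (mul q z) = mul (mul a' q) z := by
    intro q z
    obtain ⟨p, hp0⟩ := (hlb q).2 e
    have hp : mul q p = e := hp0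
    have hpq : mul p q = e := (hcomm p q).trans hp
    have hg1 : ∀ v, mul (mul p a) (mul a' v) = mul p v := by
      intro v; rw [amid, ip_ab]
    have hge : mul (mul p a) (mul a' q) = e := by rw [hg1, hpq]
    have key := ipgen _ _ hge (mul a' (mul q z))
    rw [hg1, ipgen q p hp z] at key
    exact key.symm
  have b_right : ∀ y z, mul (mul y z) a' = mul y (mul z a') := by
    intro y z
    calc mul (mul y z) a' = mul a' (mul y z) := hcomm _ _
      _ = mul a' (mul z y) := by rw [hcomm y z]
      _ = mul (mul a' z) y := b_left z y
      _ = mul y (mul a' z) := hcomm _ _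
      _ = mul y (mul z a') := by rw [hcomm a' z]
  have a_left : ∀ q z, mul a (mul q z) = mul (mul a q) z := by
    intro q z
    calc mul a (mul q z) = mul a (mul (mul a' (mul a q)) z) := by rw [ip_ba]
      _ = mul a (mul a' (mul (mul a q) z)) := by rw [← b_left]
      _ = mul (mul a q) z := ip_ab _
  have pullR : ∀ u v, mul u (mul a v) = mul a (mul u v) := by
    intro u v
    calc mul u (mul a v) = mul (mul u a) v := (amid u v).symm
      _ = mul (mul a u) v := by rw [hcomm u a]
      _ = mul a (mul u v) := (a_left u v).symm
  have circ_eq : ∀ u v, circ u v = mul u v := by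
    intro u v
    rw [circ_eqn, a_left, ip_ab]
  have star_eq : ∀ u v, star u v = mul a (mul u v) := by
    intro u v
    have h := hstar u (mul a v)
    rw [hre, ip_ba] at h
    rw [h, pullR]
  have star2_eq : ∀ u v, star2 u v = mul a (mul u v) := by
    intro u v
    have h := hstar2 (mul a u) v
    rw [hle] at h
    have h2 : mul (mul a u) a' = u := by rw [hcomm, ip_ba]
    rw [h2] at h
    rw [h, ← a_left]
  have starC : ∀ s : L → L → L, (∀ u v, s u v = mul a (mul u v)) →
      (∃ γ : L → L, Function.Bijective γ ∧ ∀ x y, γ (s x y) = circ (γ x) (γ y)) ∧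
      ((∃ e₅, IsLoopOp s e₅) ∧ CIdent s ∧ CommOp s) := by
    intro s hs
    constructor
    · refine ⟨fun x => mul a x, hlb a, ?_⟩
      intro x y
      rw [hs, circ_eq, ← a_left x (mul a y), pullR x y]
    constructor
    · refine ⟨a', ?_, ?_, ?_, ?_⟩
      · intro x; rw [hs]; exact ip_ab x
      · intro x; rw [hs, hcomm x a']; exact ip_ab x
      · intro u
        have hfe : (fun x => s u x) = (fun w => mul a w) ∘ (fun x => mul u x) :=
          funext fun x => hs u x
        rw [hfe]; exact (hlb a).comp (hlb u)
      · intro u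
        have hfe : (fun x => s x u) = (fun w => mul a w) ∘ (fun x => mul x u) :=
          funext fun x => hs x u
        rw [hfe]; exact (hlb a).comp (hrb u)
    constructor
    · intro x y z
      simp only [hs]
      rw [← a_left (mul y x) x, ← a_left (mul a (mul (mul y x) x)) z,
        ← a_left (mul (mul y x) x) z, pullR x (mul x z),
        pullR y (mul a (mul x (mul x z))), pullR y (mul x (mul x z)), hC x y z]
    · intro u v; rw [hs, hs, hcomm u v]
  obtain ⟨hiso1, hloopS, hCS, hcommS⟩ := starC star star_eq
  obtain ⟨hiso2, hloopS2, hCS2, hcommS2⟩ := starC star2 star2_eq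
  refine ⟨⟨?_, ?_, ?_, hcomm₂⟩, hiso1, hiso2, ⟨hloopS, hCS, hcommS⟩,
    ⟨hloopS2, hCS2, hcommS2⟩⟩
  · intro x y; rw [circ_eq]; exact b_left x y
  · intro x y; rw [circ_eq]; exact b_right x y
  · intro x y z; simp only [circ_eq]; exact hC x y z
end

section
/- Let (L,·) be a commutative loop with identity e which is an LC-loop, an RC-loop, or a C-loop; let a ∈ L, set B = L_a (= R_a by commutativity), and let (L,∘) be a commutative loop such that (I,B,B) is an isotopism from (L,·) to (L,∘). Let ∗ denote the operation of the f,g-isotope F_{a⁻¹,e} and ⋆ the operation of F_{e,a⁻¹}. Then (L,·), (L,∘), (L,∗) and (L,⋆) are pairwise isotopic commutative C-loops, and the following generalized distributive laws hold for all x,y ∈ L: a·(x∗y) = (a·x)∘(y·a), (x∗y)·a = (x·a)∘(y·a), a·(x⋆y) = (a·x)∘(y·a), and (x⋆y)·a = (x·a)∘(y·a). -/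
lemma aux_C_of_LC {L : Type*} (m : L → L → L) (e : L) (h1 : ∀ x, m e x = x)
    (h2 : ∀ x, m x e = x) (hc : CommOp m) (hlc : LCIdent m) : CIdent m := by
  have lalt : ∀ x z, m (m x x) z = m x (m x z) := by
    intro x z
    have h := hlc x e z
    simpa [h1, h2] using h
  have nl : ∀ x y z, m (m (m x x) y) z = m (m x x) (m y z) := by
    intro x y z
    have h := hlc x y z
    rw [← lalt x y, ← lalt x (m y z)] at h
    exact h
  intro x y z
  have e1 : m (m y x) x = m (m x x) y := by
    rw [hc (m y x) x, hc y x]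
    exact (lalt x y).symm
  rw [e1, nl x y z, ← lalt x z, hc y z, ← nl x z y]
  exact hc _ _

lemma aux_C_of_RC {L : Type*} (m : L → L → L) (e : L) (h1 : ∀ x, m e x = x)
    (h2 : ∀ x, m x e = x) (hc : CommOp m) (hrc : RCIdent m) : CIdent m := by
  have ralt : ∀ x y, m (m y x) x = m y (m x x) := by
    intro x y
    have h := hrc x y e
    simpa [h1, h2] using h
  have nr : ∀ x y z, m (m y z) (m x x) = m y (m z (m x x)) := by
    intro x y z
    have h := hrc x y z
    rw [ralt x (m y z), ralt x z] at h
    exact h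
  have lalt : ∀ x z, m (m x x) z = m x (m x z) := by
    intro x z
    calc m (m x x) z = m z (m x x) := hc _ _
      _ = m (m z x) x := (ralt x z).symm
      _ = m x (m z x) := hc _ _
      _ = m x (m x z) := by rw [hc z x]
  intro x y z
  calc m (m (m y x) x) z = m (m y (m x x)) z := by rw [ralt x y]
    _ = m z (m y (m x x)) := hc _ _
    _ = m (m z y) (m x x) := (nr x z y).symm
    _ = m (m y z) (m x x) := by rw [hc z y]
    _ = m y (m z (m x x)) := nr x y z
    _ = m y (m (m x x) z) := by rw [hc z (m x x)]
    _ = m y (m x (m x z)) := by rw [lalt x z]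

/-- Let `(L,·)` be a commutative loop with identity `e` which is an
LC-loop, an RC-loop or a C-loop; let `a ∈ L` (with inverse `a⁻¹`), let `(L,∘)` be a
commutative loop with `(I, L_a, L_a)` an isotopism from `(L,·)` to `(L,∘)`, let
`∗ = F_{a⁻¹,e}` and `⋆ = F_{e,a⁻¹}`. Then `(L,·)`, `(L,∘)`, `(L,∗)`, `(L,⋆)` are
pairwise isotopic commutative C-loops and the generalized distributive laws
a·(x∗y) = (a·x)∘(y·a), (x∗y)·a = (x·a)∘(y·a), a·(x⋆y) = (a·x)∘(y·a) and
(x⋆y)·a = (x·a)∘(y·a) hold. -/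
theorem stmt5 {L : Type*} (mul circ star star2 : L → L → L) (e e₂ a a' : L)
    (hloop : IsLoopOp mul e) (hcomm : CommOp mul)
    (hkind : LCIdent mul ∨ RCIdent mul ∨ CIdent mul)
    (hinv : mul a a' = e ∧ mul a' a = e)
    (hloop₂ : IsLoopOp circ e₂) (hcomm₂ : CommOp circ)
    (hiso : ∀ x y, circ x (mul a y) = mul (mul x y) a)
    (hstar : ∀ x y, star (mul x e) (mul a' y) = mul x y)
    (hstar2 : ∀ x y, star2 (mul x a') (mul e y) = mul x y) :
    ((CIdent mul ∧ CommOp mul) ∧ (CIdent circ ∧ CommOp circ) ∧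
     ((∃ e₃, IsLoopOp star e₃) ∧ CIdent star ∧ CommOp star) ∧
     ((∃ e₄, IsLoopOp star2 e₄) ∧ CIdent star2 ∧ CommOp star2)) ∧
    (Isotopic mul circ ∧ Isotopic mul star ∧ Isotopic mul star2 ∧
     Isotopic circ star ∧ Isotopic circ star2 ∧ Isotopic star star2) ∧
    ((∀ x y, mul a (star x y) = circ (mul a x) (mul y a)) ∧
     (∀ x y, mul (star x y) a = circ (mul x a) (mul y a)) ∧
     (∀ x y, mul a (star2 x y) = circ (mul a x) (mul y a)) ∧
     (∀ x y, mul (star2 x y) a = circ (mul x a) (mul y a))) := by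
  obtain ⟨hid₁, hid₂, hLbij, hRbij⟩ := hloop
  -- The C identity for mul
  have hC : CIdent mul := by
    rcases hkind with h | h | h
    · exact aux_C_of_LC mul e hid₁ hid₂ hcomm h
    · exact aux_C_of_RC mul e hid₁ hid₂ hcomm h
    · exact h
  -- left and right alternativity
  have lalt : ∀ x z, mul (mul x x) z = mul x (mul x z) := by
    intro x z
    have h := hC x e z
    simpa [hid₁, hid₂] using h
  have ralt : ∀ x y, mul (mul y x) x = mul y (mul x x) := by
    intro x y
    have h := hC x y e
    simpa [hid₁, hid₂] using h
  -- squares in the middle nucleus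
  have sqNmu : ∀ x y z, mul (mul y (mul x x)) z = mul y (mul (mul x x) z) := by
    intro x y z
    have h := hC x y z
    rw [ralt x y, ← lalt x z] at h
    exact h
  -- inverse properties for a
  have lipa : ∀ z, mul a' (mul a z) = z := by
    have key : ∀ z, mul a z = mul a' (mul a (mul a z)) := by
      intro z
      have h := hC a a' z
      rw [hinv.2, hid₁ a] at h
      exact h
    intro w
    obtain ⟨z, hz⟩ := (hLbij a).2 w
    have hz' : mul a z = w := hz
    rw [← hz']
    exact (key z).symm
  have lipa' : ∀ z, mul a (mul a' z) = z := by
    have key : ∀ z, mul a' z = mul a (mul a' (mul a' z)) := by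
      intro z
      have h := hC a' a z
      rw [hinv.1, hid₁ a'] at h
      exact h
    intro w
    obtain ⟨z, hz⟩ := (hLbij a').2 w
    have hz' : mul a' z = w := hz
    rw [← hz']
    exact (key z).symm
  -- the key symmetry property of a, from commutativity of circ
  have S : ∀ s t, mul (mul a s) t = mul (mul a t) s := by
    intro s t
    have h1 := hiso (mul a s) t
    have h2 := hiso (mul a t) s
    have h3 : mul (mul (mul a s) t) a = mul (mul (mul a t) s) a := by
      rw [← h1, ← h2]
      exact hcomm₂ _ _
    exact (hRbij a).1 h3
  have I1 : ∀ u v, mul (mul a u) v = mul u (mul a v) := fun u v =>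
    (S u v).trans (hcomm _ _)
  have K : ∀ s u, mul (mul a s) (mul a' u) = mul s u := by
    intro s u
    rw [I1 s (mul a' u), lipa' u]
  have S' : ∀ u v, mul (mul a' u) v = mul (mul a' v) u := by
    intro u v
    calc mul (mul a' u) v = mul (mul a' u) (mul a (mul a' v)) := by rw [lipa' v]
      _ = mul (mul a (mul a' v)) (mul a' u) := hcomm _ _
      _ = mul (mul a' v) u := K (mul a' v) u
  have I1' : ∀ u v, mul (mul a' u) v = mul u (mul a' v) := fun u v =>
    (S' u v).trans (hcomm _ _)
  -- closed forms
  have starfun : ∀ u v, star u v = mul u (mul a v) := by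
    have hstar' : ∀ x y, star x (mul a' y) = mul x y := by
      intro x y
      have h := hstar x y
      rwa [hid₂ x] at h
    intro u v
    have h := hstar' u (mul a v)
    rwa [lipa v] at h
  have star2fun : ∀ u v, star2 u v = mul (mul a u) v := by
    have hstar2' : ∀ x y, star2 (mul x a') y = mul x y := by
      intro x y
      have h := hstar2 x y
      rwa [hid₁ y] at h
    intro u v
    have h := hstar2' (mul a u) v
    have h2 : mul (mul a u) a' = u := by rw [hcomm (mul a u) a']; exact lipa u
    rwa [h2] at h
  have star2_eq_star : ∀ u v, star2 u v = star u v := by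
    intro u v
    rw [star2fun u v, starfun u v]
    exact I1 u v
  have circfun : ∀ u v, circ u v = mul a (mul (mul a' u) v) := by
    intro u v
    have h := hiso u (mul a' v)
    rw [lipa' v] at h
    rw [h, hcomm (mul u (mul a' v)) a, ← I1' u v]
  have hpsi : ∀ u v, mul a' (circ u v) = star (mul a' u) (mul a' v) := by
    intro u v
    rw [circfun u v, lipa (mul (mul a' u) v), starfun (mul a' u) (mul a' v), lipa' v]
  have hrep : ∀ u v, circ u v = mul a (star (mul a' u) (mul a' v)) := by
    intro u v
    rw [← hpsi u v, lipa' (circ u v)]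
  -- the key computation for the C identity of star
  have G0 : ∀ c t, mul a (mul (mul a' c) (mul a (mul (mul a' c) t))) = mul (mul c c) t := by
    intro c t
    calc mul a (mul (mul a' c) (mul a (mul (mul a' c) t)))
        = mul a (mul (mul a (mul a' c)) (mul (mul a' c) t)) := by
          rw [I1 (mul a' c) (mul (mul a' c) t)]
      _ = mul a (mul c (mul (mul a' c) t)) := by rw [lipa' c]
      _ = mul a (mul c (mul (mul a' t) c)) := by rw [S' c t]
      _ = mul a (mul (mul (mul a' t) c) c) := by rw [hcomm c (mul (mul a' t) c)]
      _ = mul a (mul (mul a' t) (mul c c)) := by rw [ralt c (mul a' t)]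
      _ = mul a (mul (mul a' (mul c c)) t) := by rw [S' t (mul c c)]
      _ = mul a (mul a' (mul (mul c c) t)) := by rw [sqNmu c a' t]
      _ = mul (mul c c) t := lipa' _
  have G : ∀ x t, mul a (mul x (mul a (mul x t))) = mul (mul (mul a x) (mul a x)) t := by
    intro x t
    have h := G0 (mul a x) t
    rwa [lipa x] at h
  have hCstar : CIdent star := by
    intro x y z
    simp only [starfun]
    rw [G x (mul a z), ralt (mul a x) y]
    exact sqNmu (mul a x) y (mul a z)
  have hCommStar : CommOp star := by
    intro x y
    rw [starfun x y, starfun y x]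
    calc mul x (mul a y) = mul (mul a y) x := hcomm _ _
      _ = mul (mul a x) y := S y x
      _ = mul y (mul a x) := hcomm _ _
  have hCstar2 : CIdent star2 := by
    intro x y z
    simp only [star2_eq_star]
    exact hCstar x y z
  have hCommStar2 : CommOp star2 := by
    intro x y
    rw [star2_eq_star x y, star2_eq_star y x]
    exact hCommStar x y
  have hCcirc : CIdent circ := by
    intro x y z
    have h := hCstar (mul a' x) (mul a' y) (mul a' z)
    calc circ (circ (circ y x) x) z
        = mul a (star (mul a' (circ (circ y x) x)) (mul a' z)) := hrep _ _
      _ = mul a (star (star (mul a' (circ y x)) (mul a' x)) (mul a' z)) := by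
          rw [hpsi (circ y x) x]
      _ = mul a (star (star (star (mul a' y) (mul a' x)) (mul a' x)) (mul a' z)) := by
          rw [hpsi y x]
      _ = mul a (star (mul a' y) (star (mul a' x) (star (mul a' x) (mul a' z)))) := by
          rw [h]
      _ = mul a (star (mul a' y) (star (mul a' x) (mul a' (circ x z)))) := by
          rw [hpsi x z]
      _ = mul a (star (mul a' y) (mul a' (circ x (circ x z)))) := by
          rw [hpsi x (circ x z)]
      _ = circ y (circ x (circ x z)) := (hrep _ _).symm
  -- loop structures
  have starloop : IsLoopOp star a' := by
    refine ⟨?_, ?_, ?_, ?_⟩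
    · intro x
      rw [starfun a' x]
      exact lipa x
    · intro x
      rw [starfun x a', hinv.1, hid₂ x]
    · intro c
      have hfn : (fun x => star c x) = (fun w => mul c w) ∘ (fun x => mul a x) :=
        funext fun x => starfun c x
      rw [hfn]
      exact (hLbij c).comp (hLbij a)
    · intro c
      have hfn : (fun x => star x c) = fun x => mul x (mul a c) :=
        funext fun x => starfun x c
      rw [hfn]
      exact hRbij (mul a c)
  have star2loop : IsLoopOp star2 a' := by
    refine ⟨?_, ?_, ?_, ?_⟩
    · intro x
      rw [star2_eq_star a' x, starfun a' x]
      exact lipa x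
    · intro x
      rw [star2_eq_star x a', starfun x a', hinv.1, hid₂ x]
    · intro c
      have hfn : (fun x => star2 c x) = fun x => mul (mul a c) x :=
        funext fun x => star2fun c x
      rw [hfn]
      exact hLbij (mul a c)
    · intro c
      have hfn : (fun x => star2 x c) = (fun w => mul w c) ∘ (fun x => mul a x) :=
        funext fun x => star2fun x c
      rw [hfn]
      exact (hRbij c).comp (hLbij a)
  -- isotopies
  have iso1 : Isotopic mul circ :=
    ⟨id, fun y => mul a y, fun w => mul w a, Function.bijective_id, hLbij a, hRbij a,
      fun x y => hiso x y⟩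
  have iso2 : Isotopic mul star := by
    refine ⟨id, fun y => mul a' y, id, Function.bijective_id, hLbij a',
      Function.bijective_id, fun x y => ?_⟩
    show star x (mul a' y) = mul x y
    rw [starfun x (mul a' y), lipa' y]
  have iso3 : Isotopic mul star2 := by
    refine ⟨fun x => mul a' x, id, id, hLbij a', Function.bijective_id,
      Function.bijective_id, fun x y => ?_⟩
    show star2 (mul a' x) y = mul x y
    rw [star2fun (mul a' x) y, lipa' x]
  have iso4 : Isotopic circ star :=
    ⟨fun x => mul a' x, fun x => mul a' x, fun x => mul a' x, hLbij a', hLbij a', hLbij a',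
      fun x y => (hpsi x y).symm⟩
  have iso5 : Isotopic circ star2 := by
    refine ⟨fun x => mul a' x, fun x => mul a' x, fun x => mul a' x, hLbij a', hLbij a',
      hLbij a', fun x y => ?_⟩
    show star2 (mul a' x) (mul a' y) = mul a' (circ x y)
    rw [star2_eq_star (mul a' x) (mul a' y)]
    exact (hpsi x y).symm
  have iso6 : Isotopic star star2 :=
    ⟨id, id, id, Function.bijective_id, Function.bijective_id, Function.bijective_id,
      fun x y => star2_eq_star x y⟩
  -- distributive laws
  have d1 : ∀ x y, mul a (star x y) = circ (mul a x) (mul y a) := by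
    intro x y
    rw [starfun x y, circfun (mul a x) (mul y a), lipa x, hcomm y a]
  have d2 : ∀ x y, mul (star x y) a = circ (mul x a) (mul y a) := by
    intro x y
    rw [hcomm (star x y) a, hcomm x a]
    exact d1 x y
  have d3 : ∀ x y, mul a (star2 x y) = circ (mul a x) (mul y a) := by
    intro x y
    rw [star2_eq_star x y]
    exact d1 x y
  have d4 : ∀ x y, mul (star2 x y) a = circ (mul x a) (mul y a) := by
    intro x y
    rw [star2_eq_star x y]
    exact d2 x y
  exact ⟨⟨⟨hC, hcomm⟩, ⟨hCcirc, hcomm₂⟩, ⟨⟨a', starloop⟩, hCstar, hCommStar⟩,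
    ⟨⟨a', star2loop⟩, hCstar2, hCommStar2⟩⟩,
    ⟨iso1, iso2, iso3, iso4, iso5, iso6⟩, ⟨d1, d2, d3, d4⟩⟩
end

section
/- Let (L,·) be an LC-loop with identity e, let a ∈ L and set A = L_a, and let (L,∘) be a loop such that (A,I,A) is an isotopism of (L,·) onto (L,∘), i.e. (a·x) ∘ y = a·(x·y) for all x,y. Let a⁻¹ be the left inverse of a (the unique element with a⁻¹·a = e) and let ∗ denote the operation of the f,g-isotope F_{a⁻¹,e}. Then: (1) ∘ coincides with the left derivative F^{a⁻¹} of (L,·) with respect to a⁻¹; (2) A = L_a is an isomorphism of (L,∗) onto (L,∘); (3) the generalized left distributive law a·(x∗y) = (a·x)∘(a·y) holds for all x,y ∈ L. -/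
/-- Let `(L,·)` be an LC-loop with identity `e`, `a ∈ L`, and `(L,∘)`
a loop such that `(L_a, I, L_a)` is an isotopism of `(L,·)` onto `(L,∘)`
(i.e. (a·x) ∘ y = a·(x·y)). With `a⁻¹` the left inverse of `a` and `∗ = F_{a⁻¹,e}`:
(1) `∘` coincides with the left derivative `F^{a⁻¹}` (a⁻¹·(x∘y) = (a⁻¹·x)·y);
(2) `L_a` is an isomorphism of `(L,∗)` onto `(L,∘)`;
(3) a·(x∗y) = (a·x)∘(a·y) for all x, y. -/
theorem stmt6 {L : Type*} (mul circ star : L → L → L) (e e₂ a a' : L)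
    (hloop : IsLoopOp mul e) (hLC : LCIdent mul)
    (hinv : mul a' a = e)
    (hloop₂ : IsLoopOp circ e₂)
    (hiso : ∀ x y, circ (mul a x) y = mul a (mul x y))
    (hstar : ∀ x y, star (mul x e) (mul a' y) = mul x y) :
    (∀ x y, mul a' (circ x y) = mul (mul a' x) y) ∧
    (Function.Bijective (fun x => mul a x) ∧
      ∀ x y, mul a (star x y) = circ (mul a x) (mul a y)) ∧
    (∀ x y, mul a (star x y) = circ (mul a x) (mul a y)) := by

  obtain ⟨hle, hre, hlb, hrb⟩ := hloop
  -- LIP: a'·(a·z) = z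
  have lip : ∀ z, mul a' (mul a z) = z := by
    intro z
    have h := hLC a' a z
    rw [hinv, hre] at h
    exact ((hlb a').1 h).symm
  -- a·(a'·z) = z
  have lip' : ∀ z, mul a (mul a' z) = z := by
    intro z
    obtain ⟨w, hw⟩ := (hlb a).2 z
    simp only at hw
    rw [← hw, lip, hw]
  have hstar' : ∀ x y, star x y = mul x (mul a y) := by
    intro x y
    have := hstar x (mul a y)
    rwa [hre, lip] at this
  refine ⟨?_, ⟨hlb a, ?_⟩, ?_⟩
  · intro x y
    have hx := lip' x
    calc mul a' (circ x y) = mul a' (circ (mul a (mul a' x)) y) := by rw [hx]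
      _ = mul a' (mul a (mul (mul a' x) y)) := by rw [hiso]
      _ = mul (mul a' x) y := lip _
  · intro x y
    rw [hstar', hiso]
  · intro x y
    rw [hstar', hiso]
end

section
/- Let (L,·) be an RC-loop with identity e, let a ∈ L and set B = R_a, and let (L,∘) be a loop such that (I,B,B) is an isotopism of (L,·) onto (L,∘), i.e. x ∘ (y·a) = (x·y)·a for all x,y. Let a⁻¹ be the right inverse of a (the unique element with a·a⁻¹ = e) and let ⋆ denote the operation of the f,g-isotope F_{e,a⁻¹}. Then: (1) ∘ coincides with the right derivative F_{a⁻¹} of (L,·) with respect to a⁻¹; (2) B = R_a is an isomorphism of (L,⋆) onto (L,∘); (3) the generalized right distributive law (x⋆y)·a = (x·a)∘(y·a) holds for all x,y ∈ L. -/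
/-- Let `(L,·)` be an RC-loop with identity `e`, `a ∈ L`, and `(L,∘)`
a loop such that `(I, R_a, R_a)` is an isotopism of `(L,·)` onto `(L,∘)`
(i.e. x ∘ (y·a) = (x·y)·a). With `a⁻¹` the right inverse of `a` and `⋆ = F_{e,a⁻¹}`:
(1) `∘` coincides with the right derivative `F_{a⁻¹}` ((x∘y)·a⁻¹ = x·(y·a⁻¹));
(2) `R_a` is an isomorphism of `(L,⋆)` onto `(L,∘)`;
(3) (x⋆y)·a = (x·a)∘(y·a) for all x, y. -/
theorem stmt7 {L : Type*} (mul circ star2 : L → L → L) (e e₂ a a' : L)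
    (hloop : IsLoopOp mul e) (hRC : RCIdent mul)
    (hinv : mul a a' = e)
    (hloop₂ : IsLoopOp circ e₂)
    (hiso : ∀ x y, circ x (mul y a) = mul (mul x y) a)
    (hstar2 : ∀ x y, star2 (mul x a') (mul e y) = mul x y) :
    (∀ x y, mul (circ x y) a' = mul x (mul y a')) ∧
    (Function.Bijective (fun x => mul x a) ∧
      ∀ x y, mul (star2 x y) a = circ (mul x a) (mul y a)) ∧
    (∀ x y, mul (star2 x y) a = circ (mul x a) (mul y a)) := by
  obtain ⟨he1, he2, hL, hR⟩ := hloop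
  -- left inverse: a' · a = e
  have ha'a : mul a' a = e := by
    have h := hRC a a a'
    rw [hinv, he1] at h
    have h2 : mul a a = mul a (mul (mul a' a) a) := h
    have h3 : a = mul (mul a' a) a := (hL a).1 h2
    have h4 : mul e a = mul (mul a' a) a := by rw [he1]; exact h3
    exact ((hR a).1 h4).symm
  -- key1 : (y·a')·a = y
  have key1 : ∀ y, mul (mul y a') a = y := by
    intro y
    have h := hRC a y a'
    rw [ha'a, he1] at h
    exact (hR a).1 h
  -- key2 : (y·a)·a' = y
  have key2 : ∀ y, mul (mul y a) a' = y := by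
    intro y
    have h := hRC a' y a
    rw [hinv, he1] at h
    exact (hR a').1 h
  have part1 : ∀ x y, mul (circ x y) a' = mul x (mul y a') := by
    intro x y
    obtain ⟨w, hw⟩ := (hR a).2 y
    simp only at hw
    rw [← hw, hiso, key2, key2]
  have part3 : ∀ x y, mul (star2 x y) a = circ (mul x a) (mul y a) := by
    intro x y
    obtain ⟨u, hu⟩ := (hR a').2 x
    simp only at hu
    have hs : star2 x y = mul u y := by
      have := hstar2 u y
      rw [hu, he1] at this
      exact this
    rw [hs, hiso, ← hu, key1]
  exact ⟨part1, ⟨hR a, part3⟩, part3⟩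
end

section
/- Let (L,·) be a central square C-loop with identity e and let a ∈ L with two-sided inverse a⁻¹. (1) If A = L_a and (L,∘) is a loop such that (A,I,A) is an isotopism of (L,·) onto (L,∘), then ∘ coincides with the left derivative F^{a⁻¹}, L_a is an isomorphism of (L,F_{a⁻¹,e}) onto (L,∘), and a·(x∗y) = (a·x)∘(a·y) for all x,y, where ∗ is the operation of F_{a⁻¹,e}. (2) If B = R_a and (L,∘) is a loop such that (I,B,B) is an isotopism of (L,·) onto (L,∘), then ∘ coincides with the right derivative F_{a⁻¹}, R_a is an isomorphism of (L,F_{e,a⁻¹}) onto (L,∘), and (x⋆y)·a = (x·a)∘(y·a) for all x,y, where ⋆ is the operation of F_{e,a⁻¹}. -/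
/-- Let `(L,·)` be a central square C-loop with identity `e` and
`a ∈ L` with two-sided inverse `a⁻¹`.
(1) If `(L,∘₁)` is a loop with `(L_a, I, L_a)` an isotopism of `(L,·)` onto `(L,∘₁)`,
then `∘₁` coincides with the left derivative `F^{a⁻¹}`, `L_a` is an isomorphism of
`(L, F_{a⁻¹,e})` onto `(L,∘₁)`, and a·(x∗y) = (a·x)∘₁(a·y) for all x,y.
(2) If `(L,∘₂)` is a loop with `(I, R_a, R_a)` an isotopism of `(L,·)` onto `(L,∘₂)`,
then `∘₂` coincides with the right derivative `F_{a⁻¹}`, `R_a` is an isomorphism of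
`(L, F_{e,a⁻¹})` onto `(L,∘₂)`, and (x⋆y)·a = (x·a)∘₂(y·a) for all x,y. -/
theorem stmt8 {L : Type*} (mul circ1 circ2 star star2 : L → L → L) (e e₂ e₃ a a' : L)
    (hloop : IsLoopOp mul e) (hC : CIdent mul) (hcs : CentralSquareOp mul)
    (hinv : mul a a' = e ∧ mul a' a = e)
    (hloop₂ : IsLoopOp circ1 e₂)
    (hiso1 : ∀ x y, circ1 (mul a x) y = mul a (mul x y))
    (hloop₃ : IsLoopOp circ2 e₃)
    (hiso2 : ∀ x y, circ2 x (mul y a) = mul (mul x y) a)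
    (hstar : ∀ x y, star (mul x e) (mul a' y) = mul x y)
    (hstar2 : ∀ x y, star2 (mul x a') (mul e y) = mul x y) :
    ((∀ x y, mul a' (circ1 x y) = mul (mul a' x) y) ∧
     (Function.Bijective (fun x => mul a x) ∧
       ∀ x y, mul a (star x y) = circ1 (mul a x) (mul a y))) ∧
    ((∀ x y, mul (circ2 x y) a' = mul x (mul y a')) ∧
     (Function.Bijective (fun x => mul x a) ∧
       ∀ x y, mul (star2 x y) a = circ2 (mul x a) (mul y a))) := by

  obtain ⟨hid_l, hid_r, hLbij, hRbij⟩ := hloop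
  -- key cancellation lemmas from the C identity
  have l1 : ∀ w, mul a' (mul a w) = w := by
    intro w
    obtain ⟨z, hz⟩ := (hLbij a).2 w
    have h := hC a a' z
    rw [hinv.2, hid_l] at h
    simp only at hz
    rw [← hz, ← h]
  have r1 : ∀ w, mul (mul w a) a' = w := by
    intro w
    obtain ⟨z, hz⟩ := (hRbij a).2 w
    have h := hC a z a'
    rw [hinv.1, hid_r] at h
    simp only at hz
    rw [← hz, h]
  refine ⟨⟨?_, hLbij a, ?_⟩, ?_, hRbij a, ?_⟩
  · intro x y
    obtain ⟨u, hu⟩ := (hLbij a).2 x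
    simp only at hu
    rw [← hu, hiso1, l1, l1]
  · intro x y
    have h := hstar x (mul a y)
    rw [hid_r, l1] at h
    rw [h, hiso1]
  · intro x y
    obtain ⟨w, hw⟩ := (hRbij a).2 y
    simp only at hw
    rw [← hw, hiso2, r1, r1]
  · intro x y
    have h := hstar2 (mul x a) y
    rw [hid_l, r1] at h
    rw [h, hiso2]
end

section
/- Let (L,·) be a central square C-loop with identity e, let a ∈ L with two-sided inverse a⁻¹, set A = L_a, and let (L,∘) be an alternative central square loop such that (A,I,A) is an isotopism of (L,·) onto (L,∘). Let ∗ denote the operation of the f,g-isotope F_{a⁻¹,e}. Then (L,∘) is a C-loop, L_a is an isomorphism of (L,∗) onto (L,∘) (so (L,∗) is also a central square C-loop), and the system {(L,·), (L,∘), (L,∗)} consists of pairwise isotopic central square C-loops satisfying the generalized left distributive law a·(x∗y) = (a·x)∘(a·y) for all x,y ∈ L. -/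
/-- Let `(L,·)` be a central square C-loop with identity `e`,
`a ∈ L` with two-sided inverse `a⁻¹`, and let `(L,∘)` be an alternative central
square loop with `(L_a, I, L_a)` an isotopism of `(L,·)` onto `(L,∘)`. With
`∗ = F_{a⁻¹,e}`: `(L,∘)` is a C-loop; `L_a` is an isomorphism of `(L,∗)` onto
`(L,∘)` (so `(L,∗)` is a central square C-loop); the three loops are pairwise
isotopic central square C-loops, and a·(x∗y) = (a·x)∘(a·y) for all x,y. -/
theorem stmt9 {L : Type*} (mul circ star : L → L → L) (e e₂ a a' : L)
    (hloop : IsLoopOp mul e) (hC : CIdent mul) (hcs : CentralSquareOp mul)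
    (hinv : mul a a' = e ∧ mul a' a = e)
    (hloop₂ : IsLoopOp circ e₂) (halt : AlternativeOp circ) (hcs₂ : CentralSquareOp circ)
    (hiso : ∀ x y, circ (mul a x) y = mul a (mul x y))
    (hstar : ∀ x y, star (mul x e) (mul a' y) = mul x y) :
    CIdent circ ∧
    (Function.Bijective (fun x => mul a x) ∧
      ∀ x y, mul a (star x y) = circ (mul a x) (mul a y)) ∧
    ((∃ e₃, IsLoopOp star e₃) ∧ CIdent star ∧ CentralSquareOp star) ∧
    (Isotopic mul circ ∧ Isotopic mul star ∧ Isotopic circ star) ∧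
    (∀ x y, mul a (star x y) = circ (mul a x) (mul a y)) := by

  obtain ⟨hle, hre, hlb, hrb⟩ := hloop
  have lip : ∀ w, mul a' (mul a w) = w := by
    intro w
    obtain ⟨z, hz⟩ := (hlb a).2 w
    have hz' : mul a z = w := hz
    have h := hC a a' z
    rw [hinv.2, hle] at h
    rw [hz'] at h
    exact h.symm
  have lip' : ∀ w, mul a (mul a' w) = w := by
    intro w
    obtain ⟨z, hz⟩ := (hlb a').2 w
    have hz' : mul a' z = w := hz
    have h := hC a' a z
    rw [hinv.1, hle] at h
    rw [hz'] at h
    exact h.symm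
  have hstar' : ∀ x y, star x y = mul x (mul a y) := by
    intro x y
    have h := hstar x (mul a y)
    rw [hre x, lip y] at h
    exact h
  have key : ∀ x y, mul a (star x y) = circ (mul a x) (mul a y) := by
    intro x y
    rw [hiso x (mul a y), hstar' x y]
  have Ccirc : CIdent circ := by
    intro x y z
    rw [halt.2 x y, (hcs₂ x).2.2.1 y z, halt.1 x z]
  refine ⟨Ccirc, ⟨hlb a, key⟩, ⟨⟨a', ?_, ?_, ?_, ?_⟩, ?_, ?_⟩, ⟨?_, ?_, ?_⟩, key⟩
  · intro x; rw [hstar' a' x, lip x]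
  · intro x; rw [hstar' x a', hinv.1, hre x]
  · intro c
    have : (fun x => star c x) = (fun x => mul c x) ∘ (fun x => mul a x) :=
      funext fun x => hstar' c x
    rw [this]; exact (hlb c).comp (hlb a)
  · intro c
    have : (fun x => star x c) = (fun x => mul x (mul a c)) :=
      funext fun x => hstar' x c
    rw [this]; exact hrb (mul a c)
  · intro x y z
    apply (hlb a).1
    show mul a _ = mul a _
    simp only [key]
    exact Ccirc (mul a x) (mul a y) (mul a z)
  · intro x
    refine ⟨fun w => ?_, fun w z => ?_, fun w z => ?_, fun w z => ?_⟩
    · apply (hlb a).1; show mul a _ = mul a _; simp only [key]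
      exact (hcs₂ (mul a x)).1 (mul a w)
    · apply (hlb a).1; show mul a _ = mul a _; simp only [key]
      exact (hcs₂ (mul a x)).2.1 (mul a w) (mul a z)
    · apply (hlb a).1; show mul a _ = mul a _; simp only [key]
      exact (hcs₂ (mul a x)).2.2.1 (mul a w) (mul a z)
    · apply (hlb a).1; show mul a _ = mul a _; simp only [key]
      exact (hcs₂ (mul a x)).2.2.2 (mul a w) (mul a z)
  · exact ⟨fun x => mul a x, id, fun x => mul a x, hlb a, Function.bijective_id,
      hlb a, fun x y => hiso x y⟩
  · refine ⟨id, fun y => mul a' y, id, Function.bijective_id, hlb a',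
      Function.bijective_id, fun x y => ?_⟩
    show star x (mul a' y) = mul x y
    rw [hstar' x (mul a' y), lip' y]
  · refine ⟨fun x => mul a' x, fun x => mul a' x, fun x => mul a' x, hlb a', hlb a',
      hlb a', fun x y => ?_⟩
    show star (mul a' x) (mul a' y) = mul a' (circ x y)
    apply (hlb a).1
    show mul a _ = mul a _
    rw [key, lip' x, lip' y, lip' (circ x y)]
end

section
/- Let (G,·) and (H,∘) be loops on the same underlying set. If the triple (A,B,B) is an isotopism from (G,·) to (H,∘), then (G,·) is an LC-loop if and only if (H,∘) is an LC-loop. If the triple (A,B,A) is an isotopism from (G,·) to (H,∘), then (G,·) is an RC-loop if and only if (H,∘) is an RC-loop. -/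
lemma lc_iff_exists {L : Type*} (mul : L → L → L) (e : L)
    (hl : ∀ x, mul e x = x) (hr : ∀ x, mul x e = x) :
    LCIdent mul ↔ ∀ a b, ∃ d, ∀ z, mul d z = mul a (mul a (mul b z)) := by
  constructor
  · intro h a b
    exact ⟨mul a (mul a b), fun z => h a b z⟩
  · intro h x y z
    obtain ⟨d, hd⟩ := h x y
    have hde : d = mul x (mul x y) := by
      have := hd e
      rwa [hr, hr] at this
    rw [← hde]
    exact hd z

lemma rc_iff_exists {L : Type*} (mul : L → L → L) (e : L)
    (hl : ∀ x, mul e x = x) (hr : ∀ x, mul x e = x) :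
    RCIdent mul ↔ ∀ a b, ∃ d, ∀ y, mul y d = mul (mul (mul y b) a) a := by
  constructor
  · intro h a b
    exact ⟨mul (mul b a) a, fun y => (h a y b).symm⟩
  · intro h x y z
    obtain ⟨d, hd⟩ := h x z
    have hde : d = mul (mul z x) x := by
      have := hd e
      rwa [hl, hl] at this
    rw [← hde]
    exact (hd y).symm

/-- Let `(G,·)` and `(H,∘)` be loops on the same underlying set.
If `(A,B,B)` is an isotopism from `(G,·)` to `(H,∘)`, then `(G,·)` is an LC-loop
iff `(H,∘)` is an LC-loop. If `(A,B,A)` is an isotopism from `(G,·)` to `(H,∘)`,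
then `(G,·)` is an RC-loop iff `(H,∘)` is an RC-loop. -/
theorem stmt14 {L : Type*} (mul circ : L → L → L) (e₁ e₂ : L)
    (hloop₁ : IsLoopOp mul e₁) (hloop₂ : IsLoopOp circ e₂) :
    (∀ A B : L → L, Function.Bijective A → Function.Bijective B →
      (∀ x y, circ (A x) (B y) = B (mul x y)) → (LCIdent mul ↔ LCIdent circ)) ∧
    (∀ A B : L → L, Function.Bijective A → Function.Bijective B →
      (∀ x y, circ (A x) (B y) = A (mul x y)) → (RCIdent mul ↔ RCIdent circ)) := by
  obtain ⟨hl₁, hr₁, -, -⟩ := hloop₁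
  obtain ⟨hl₂, hr₂, -, -⟩ := hloop₂
  constructor
  · intro A B hA hB hiso
    rw [lc_iff_exists mul e₁ hl₁ hr₁, lc_iff_exists circ e₂ hl₂ hr₂]
    constructor
    · intro h a b
      obtain ⟨x, rfl⟩ := hA.2 a
      obtain ⟨y, rfl⟩ := hA.2 b
      obtain ⟨d, hd⟩ := h x y
      refine ⟨A d, fun z => ?_⟩
      obtain ⟨w, rfl⟩ := hB.2 z
      rw [hiso, hiso, hiso, hiso, hd]
    · intro h x y
      obtain ⟨d, hd⟩ := h (A x) (A y)
      obtain ⟨d₀, rfl⟩ := hA.2 d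
      refine ⟨d₀, fun z => ?_⟩
      have := hd (B z)
      rw [hiso, hiso, hiso, hiso] at this
      exact hB.1 this
  · intro A B hA hB hiso
    rw [rc_iff_exists mul e₁ hl₁ hr₁, rc_iff_exists circ e₂ hl₂ hr₂]
    constructor
    · intro h a b
      obtain ⟨x, rfl⟩ := hB.2 a
      obtain ⟨y, rfl⟩ := hB.2 b
      obtain ⟨d, hd⟩ := h x y
      refine ⟨B d, fun z => ?_⟩
      obtain ⟨w, rfl⟩ := hA.2 z
      rw [hiso, hiso, hiso, hiso, hd]
    · intro h x y
      obtain ⟨d, hd⟩ := h (B x) (B y)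
      obtain ⟨d₀, rfl⟩ := hB.2 d
      refine ⟨d₀, fun z => ?_⟩
      have := hd (A z)
      rw [hiso, hiso, hiso, hiso] at this
      exact hA.1 this
end

section
/- Let (G,·) and (H,∘) be commutative loops on the same underlying set. If a triple of the form (A,B,B) or of the form (A,B,A) is an isotopism from (G,·) to (H,∘), then (G,·) is a C-loop if and only if (H,∘) is a C-loop. -/
private lemma key_dir {L : Type*} (mul circ : L → L → L) (e₁ e₂ : L)
    (h1 : ∀ x, mul x e₁ = x)
    (h2l : ∀ x, circ e₂ x = x) (h2r : ∀ x, circ x e₂ = x)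
    (hc2 : CommOp circ)
    (A B : L → L) (hA : Function.Surjective A) (hB : Function.Surjective B)
    (hiso : ∀ x y, circ (A x) (B y) = B (mul x y))
    (hC : CIdent mul) : CIdent circ := by
  set b := B e₁ with hb
  have hBdef : ∀ x, B x = circ (A x) b := by
    intro x
    have := hiso x e₁
    rw [h1] at this
    exact this.symm
  have R : ∀ x y, circ (A x) (circ (A y) b) = circ (A (mul x y)) b := by
    intro x y
    rw [← hBdef, ← hBdef, hiso]
  have S : ∀ x y z, circ (A y) (circ (A x) (circ (A x) (circ (A z) b)))
      = circ (A (mul (mul y x) x)) (circ (A z) b) := by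
    intro x y z
    rw [R x z, R x (mul x z), R y (mul x (mul x z)), ← hC, ← R]
  have T : ∀ u v w, circ v (circ u (circ u w)) = circ (circ v (circ u u)) w := by
    intro u v w
    obtain ⟨x, rfl⟩ := hA u
    obtain ⟨y, rfl⟩ := hA v
    obtain ⟨z, hz⟩ := hB w
    obtain ⟨z₀, hz₀⟩ := hB e₂
    have hw : w = circ (A z) b := by rw [← hz, hBdef]
    have he : circ (A z₀) b = e₂ := by rw [← hBdef]; exact hz₀
    have key1 : circ (A y) (circ (A x) (circ (A x) e₂))
        = circ (A (mul (mul y x) x)) e₂ := by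
      rw [← he]; exact S x y z₀
    rw [h2r, h2r] at key1
    rw [hw, S x y z, ← key1]
  have leftalt : ∀ u w, circ u (circ u w) = circ (circ u u) w := by
    intro u w
    have := T u e₂ w
    rwa [h2l, h2l] at this
  intro x y z
  have hra : circ (circ y x) x = circ y (circ x x) := by
    rw [hc2 (circ y x) x, hc2 y x, leftalt, hc2]
  rw [hra, T x y z]

/-- Let `(G,·)` and `(H,∘)` be commutative loops on the same
underlying set. If a triple of the form `(A,B,B)` or `(A,B,A)` is an isotopism
from `(G,·)` to `(H,∘)`, then `(G,·)` is a C-loop iff `(H,∘)` is a C-loop. -/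
theorem stmt16 {L : Type*} (mul circ : L → L → L) (e₁ e₂ : L)
    (hloop₁ : IsLoopOp mul e₁) (hcomm₁ : CommOp mul)
    (hloop₂ : IsLoopOp circ e₂) (hcomm₂ : CommOp circ)
    (hiso : ∃ A B : L → L, Function.Bijective A ∧ Function.Bijective B ∧
      ((∀ x y, circ (A x) (B y) = B (mul x y)) ∨
       (∀ x y, circ (A x) (B y) = A (mul x y)))) :
    CIdent mul ↔ CIdent circ := by
  obtain ⟨A, B, hA, hB, hrel⟩ := hiso
  have h1r := hloop₁.2.1
  have h2l := hloop₂.1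
  have h2r := hloop₂.2.1
  have h1l := hloop₁.1
  rcases hrel with hrel | hrel
  · constructor
    · exact key_dir mul circ e₁ e₂ h1r h2l h2r hcomm₂ A B hA.surjective hB.surjective hrel
    · intro hC
      set eA := Equiv.ofBijective A hA with heA
      set eB := Equiv.ofBijective B hB with heB
      have hrel' : ∀ u v, mul (eA.symm u) (eB.symm v) = eB.symm (circ u v) := by
        intro u v
        have h := hrel (eA.symm u) (eB.symm v)
        have hAu : A (eA.symm u) = u := eA.apply_symm_apply u
        have hBv : B (eB.symm v) = v := eB.apply_symm_apply v
        rw [hAu, hBv] at h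
        have : eB (mul (eA.symm u) (eB.symm v)) = circ u v := h.symm
        exact (Equiv.symm_apply_eq eB).mpr this.symm ▸ by
          rw [← this, Equiv.symm_apply_apply]
      exact key_dir circ mul e₂ e₁ h2r h1l h1r hcomm₁ eA.symm eB.symm
        eA.symm.surjective eB.symm.surjective hrel' hC
  · have hrel' : ∀ x y, circ (B x) (A y) = A (mul x y) := by
      intro x y
      rw [hcomm₂, hrel y x, hcomm₁]
    constructor
    · exact key_dir mul circ e₁ e₂ h1r h2l h2r hcomm₂ B A hB.surjective hA.surjective hrel'
    · intro hC
      set eA := Equiv.ofBijective A hA with heA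
      set eB := Equiv.ofBijective B hB with heB
      have hrel'' : ∀ u v, mul (eB.symm u) (eA.symm v) = eA.symm (circ u v) := by
        intro u v
        have h := hrel' (eB.symm u) (eA.symm v)
        have hBu : B (eB.symm u) = u := eB.apply_symm_apply u
        have hAv : A (eA.symm v) = v := eA.apply_symm_apply v
        rw [hBu, hAv] at h
        have : eA (mul (eB.symm u) (eA.symm v)) = circ u v := h.symm
        rw [← this, Equiv.symm_apply_apply]
      exact key_dir circ mul e₂ e₁ h2r h1l h1r hcomm₁ eB.symm eA.symm
        eB.symm.surjective eA.symm.surjective hrel'' hC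
end
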